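/- Let d ≥ 1, let η ∈ X, let T be a legal toppling procedure, let t > 0, and let Λ be a finite subset of the set T_t = {x ∈ ℤ^d : T(t,x,η) > 0} of sites that have toppled at least once up to time t. Let β_Λ be the number of internal bonds of Λ, i.e., nearest-neighbor bonds of ℤ^d with both endpoints in Λ. Then Σ_{x∈Λ} η_t(x) ≥ β_Λ. -/

import Mathlib

open MeasureTheory Filter Topology
open scoped ENNReal NNReal

/-- Sites of the lattice `ℤ^d`. -/
abbrev Site (d : ℕ) := Fin d → ℤ

/-- Sandpile configurations: `X = ℕ^{ℤ^d}`. -/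
abbrev Config (d : ℕ) := Site d → ℕ

/-- Nearest-neighbor adjacency on `ℤ^d` (`ℓ¹`-distance one). -/
def Adjacent {d : ℕ} (x y : Site d) : Prop :=
  (∑ i, (x i - y i).natAbs) = 1

/-- Sum of the values of `f` over the `2d` nearest neighbors of `y`. -/
def nbrSum {d : ℕ} {M : Type*} [AddCommMonoid M] (f : Site d → M) (y : Site d) : M :=
  ∑ i : Fin d, (f (Function.update y i (y i + 1)) + f (Function.update y i (y i - 1)))

/-- The left limit `T(t-, x, η)` of a (monotone, `ℕ`-valued) toppling function. -/
noncomputable def leftVal {d : ℕ} (T : NNReal → Site d → Config d → ℕ)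
    (t : NNReal) (x : Site d) (η : Config d) : ℕ :=
  sSup ((fun s => T s x η) '' Set.Iio t)

/-- A toppling procedure on `ℤ^d` (Definition 2.1): a measurable map
`T : [0,∞) × ℤ^d × X → ℕ` such that (a) `T(0,x,η) = 0`; (b) `t ↦ T(t,x,η)` is
right-continuous, nondecreasing, with jumps of size at most one; (c) finitely many
jumps in every finite time interval; (d) no infinite backward chain of topplings. -/
structure TopplingProcedure (d : ℕ) where
  T : NNReal → Site d → Config d → ℕ
  measurable : ∀ x : Site d, Measurable fun p : NNReal × Config d => T p.1 x p.2
  init : ∀ (x : Site d) (η : Config d), T 0 x η = 0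
  mono : ∀ (x : Site d) (η : Config d), Monotone fun t => T t x η
  jumpLe : ∀ (x : Site d) (η : Config d) (t : NNReal), T t x η ≤ leftVal T t x η + 1
  rightCont : ∀ (x : Site d) (η : Config d) (t : NNReal),
    ∃ ε : NNReal, 0 < ε ∧ ∀ s, t ≤ s → s < t + ε → T s x η = T t x η
  finJumps : ∀ (x : Site d) (η : Config d) (b : NNReal),
    {t : NNReal | t ≤ b ∧ leftVal T t x η < T t x η}.Finite
  noBackwardChain : ∀ η : Config d, ¬ ∃ (xs : ℕ → Site d) (ts : ℕ → NNReal),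
    (∀ i, Adjacent (xs (i + 1)) (xs i)) ∧ StrictAnti ts ∧
    (∀ i, leftVal T (ts i) (xs i) η < T (ts i) (xs i) η)

namespace TopplingProcedure

variable {d : ℕ}

/-- The configuration `η_t = η − Δ T(t,·,η)` at time `t` (as a `ℤ`-valued function). -/
def configAt (P : TopplingProcedure d) (η : Config d) (t : NNReal) (y : Site d) : ℤ :=
  (η y : ℤ) + nbrSum (fun x => (P.T t x η : ℤ)) y - 2 * d * (P.T t y η : ℤ)

/-- The configuration `η_{t-}` just before time `t`. -/
noncomputable def configLeft (P : TopplingProcedure d) (η : Config d) (t : NNReal)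
    (y : Site d) : ℤ :=
  (η y : ℤ) + nbrSum (fun x => (leftVal P.T t x η : ℤ)) y - 2 * d * (leftVal P.T t y η : ℤ)

/-- Site `x` topples at time `t` if `T(t,x,η) > T(t-,x,η)`. -/
def TopplesAt (P : TopplingProcedure d) (η : Config d) (x : Site d) (t : NNReal) : Prop :=
  leftVal P.T t x η < P.T t x η

/-- A toppling procedure is legal if only unstable sites are toppled:
whenever `x` topples at time `t > 0`, `η_{t-}(x) ≥ 2d`. -/
def Legal (P : TopplingProcedure d) : Prop :=
  ∀ (η : Config d) (t : NNReal) (x : Site d), 0 < t → P.TopplesAt η x t →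
    (2 * d : ℤ) ≤ P.configLeft η t x

/-- `T` is finite for `η` if `T(∞,x,η) = sup_t T(t,x,η) < ∞` for every `x`. -/
def FiniteFor (P : TopplingProcedure d) (η : Config d) : Prop :=
  ∀ x : Site d, BddAbove (Set.range fun t => P.T t x η)

/-- `T(∞,x,η) = sup_{t ≥ 0} T(t,x,η)`. -/
noncomputable def Tinf (P : TopplingProcedure d) (η : Config d) (x : Site d) : ℕ :=
  sSup (Set.range fun t => P.T t x η)

/-- The limit configuration `η_∞ = η − Δ T(∞,·,η)` (as a `ℤ`-valued function). -/
noncomputable def finalConfig (P : TopplingProcedure d) (η : Config d) (y : Site d) : ℤ :=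
  (η y : ℤ) + nbrSum (fun x => (P.Tinf η x : ℤ)) y - 2 * d * (P.Tinf η y : ℤ)

/-- `T` is stabilizing for `η` if it is finite for `η` and the limit configuration
`η_∞` is stable, i.e. takes values in `{0, 1, …, 2d−1}`. -/
def StabilizingFor (P : TopplingProcedure d) (η : Config d) : Prop :=
  P.FiniteFor η ∧ ∀ y : Site d, 0 ≤ P.finalConfig η y ∧ P.finalConfig η y ≤ 2 * d - 1

end TopplingProcedure

/-- A configuration `η` is stabilizable if there exists a stabilizing legal
toppling procedure for `η`. -/
def Stabilizable {d : ℕ} (η : Config d) : Prop :=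
  ∃ P : TopplingProcedure d, P.Legal ∧ P.StabilizingFor η

/-- The shift of a configuration by a lattice vector `v`. -/
def shiftConfig {d : ℕ} (v : Site d) (η : Config d) : Config d := fun x => η (x + v)

/-- A probability measure on `X` is translation invariant if it is invariant
under all shifts of `ℤ^d`. -/
def TransInvariant {d : ℕ} (μ : Measure (Config d)) : Prop :=
  ∀ v : Site d, Measure.map (shiftConfig v) μ = μ

/-- `μ` is a product measure: under `μ` the coordinates `(η(x))` are i.i.d. -/
def IsProductMeasure {d : ℕ} (μ : Measure (Config d)) : Prop :=
  ProbabilityTheory.iIndepFun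
      (fun (x : Site d) (η : Config d) => η x) μ ∧
    ∀ x : Site d, Measure.map (fun η : Config d => η x) μ
      = Measure.map (fun η : Config d => η (0 : Site d)) μ

/-- `x` belongs to the set `T_∞` of sites that topple during stabilization of `η`. -/
def ToppledInf {d : ℕ} (η : Config d) (x : Site d) : Prop :=
  ∃ P : TopplingProcedure d, P.Legal ∧ P.StabilizingFor η ∧ 0 < P.Tinf η x

/-- `x` belongs to `W_∞ = T_∞ ∪ {x : η_∞(x) > 0}`: `x` topples during stabilization
of `η`, or is nonempty after stabilization. -/
def InWinf {d : ℕ} (η : Config d) (x : Site d) : Prop :=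
  ∃ P : TopplingProcedure d, P.Legal ∧ P.StabilizingFor η ∧
    (0 < P.Tinf η x ∨ 0 < P.finalConfig η x)

/-- `y` lies in the cluster of `x` of the set `S`: `x` and `y` are joined by a
nearest-neighbor path inside `S`. -/
def InClusterOf {d : ℕ} (S : Site d → Prop) (x y : Site d) : Prop :=
  ∃ (k : ℕ) (f : ℕ → Site d), f 0 = x ∧ f k = y ∧ (∀ i ≤ k, S (f i)) ∧
    ∀ i < k, Adjacent (f i) (f (i + 1))


section SandpileHelpers

variable {d : ℕ} (P : TopplingProcedure d) (η : Config d)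

lemma leftVal_le_of (x : Site d) (t : NNReal) (n : ℕ)
    (h : ∀ s, s < t → P.T s x η ≤ n) : leftVal P.T t x η ≤ n := by
  rcases Set.eq_empty_or_nonempty ((fun s => P.T s x η) '' Set.Iio t) with he | hne
  · rw [leftVal, he, csSup_empty]; exact Nat.zero_le n
  · refine csSup_le hne ?_
    rintro m ⟨s, hs, rfl⟩; exact h s hs

lemma le_leftVal (x : Site d) {s t : NNReal} (h : s < t) :
    P.T s x η ≤ leftVal P.T t x η :=
  le_csSup ⟨P.T t x η, by rintro n ⟨u, hu, rfl⟩; exact P.mono x η (le_of_lt hu)⟩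
    ⟨s, h, rfl⟩

lemma leftVal_le_T {x : Site d} {s t : NNReal} (h : s ≤ t) :
    leftVal P.T s x η ≤ P.T t x η :=
  leftVal_le_of P η x s _ (fun u hu => P.mono x η (le_of_lt (lt_of_lt_of_le hu h)))

lemma leftVal_mono (x : Site d) {s t : NNReal} (h : s ≤ t) :
    leftVal P.T s x η ≤ leftVal P.T t x η :=
  leftVal_le_of P η x s _ (fun u hu => le_leftVal P η x (lt_of_lt_of_le hu h))

lemma topplesAt_pos {x : Site d} {s : NNReal} (h : P.TopplesAt η x s) : 0 < s := by
  rcases eq_or_ne s 0 with rfl | hs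
  · exfalso
    have h' : leftVal P.T 0 x η < P.T 0 x η := h
    rw [P.init] at h'
    exact Nat.not_lt_zero _ h'
  · exact pos_iff_ne_zero.mpr hs

lemma exists_topple (x : Site d) {a b : NNReal} (hab : a ≤ b)
    (h : P.T a x η < P.T b x η) :
    ∃ c, a < c ∧ c ≤ b ∧ P.TopplesAt η x c := by
  set S : Set NNReal := {s | P.T a x η < P.T s x η} with hS
  have hbS : b ∈ S := h
  set c := sInf S with hc
  have hcb : c ≤ b := csInf_le (OrderBot.bddBelow S) hbS
  have hac : a ≤ c := by
    refine le_csInf ⟨b, hbS⟩ ?_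
    intro s hs
    by_contra hlt
    exact absurd (P.mono x η (le_of_not_ge hlt)) (not_le.2 hs)
  have hTc : P.T a x η < P.T c x η := by
    obtain ⟨ε, hε, hconst⟩ := P.rightCont x η c
    have hlt : c < c + ε := lt_add_of_pos_right c hε
    obtain ⟨u, huS, hu⟩ : ∃ u ∈ S, u < c + ε := exists_lt_of_csInf_lt ⟨b, hbS⟩ hlt
    have hcu : c ≤ u := csInf_le (OrderBot.bddBelow S) huS
    have huS' : P.T a x η < P.T u x η := huS
    rwa [hconst u hcu hu] at huS'
  have hlv : leftVal P.T c x η ≤ P.T a x η := by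
    refine leftVal_le_of P η x c _ ?_
    intro u hu
    by_contra hgt
    exact absurd (csInf_le (OrderBot.bddBelow S) (not_le.1 hgt : u ∈ S)) (not_le.2 hu)
  refine ⟨c, ?_, hcb, lt_of_le_of_lt hlv hTc⟩
  rcases lt_or_eq_of_le hac with h' | h'
  · exact h'
  · exact absurd hTc (by rw [← h']; exact lt_irrefl _)

/-- The last toppling time of `x` up to time `t`. -/
noncomputable def lastT (t : NNReal) (x : Site d) : NNReal :=
  sSup {s | s ≤ t ∧ P.TopplesAt η x s}

lemma lastT_spec {t : NNReal} {x : Site d} (hx : 0 < P.T t x η) :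
    lastT P η t x ≤ t ∧ P.TopplesAt η x (lastT P η t x) ∧
      ∀ u, u ≤ t → P.TopplesAt η x u → u ≤ lastT P η t x := by
  have hfin : {s : NNReal | s ≤ t ∧ P.TopplesAt η x s}.Finite := P.finJumps x η t
  have hne : {s : NNReal | s ≤ t ∧ P.TopplesAt η x s}.Nonempty := by
    obtain ⟨c, _, hct, hc⟩ := exists_topple P η x (zero_le : (0 : NNReal) ≤ t) (by rw [P.init]; exact hx)
    exact ⟨c, hct, hc⟩
  have hmem := hne.csSup_mem hfin
  exact ⟨hmem.1, hmem.2, fun u hut hu => le_csSup hfin.bddAbove ⟨hut, hu⟩⟩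

lemma T_const {t : NNReal} {x : Site d} (hx : 0 < P.T t x η) :
    P.T t x η = P.T (lastT P η t x) x η := by
  obtain ⟨hst, _, hub⟩ := lastT_spec P η hx
  refine le_antisymm ?_ (P.mono x η hst)
  by_contra h
  push_neg at h
  obtain ⟨c, hc1, hc2, hc3⟩ := exists_topple P η x hst h
  exact absurd (hub c hc2 hc3) (not_le.2 hc1)

/-- The directed neighbor of `x` in direction `(i, b)`. -/
def ndir (x : Site d) (w : Fin d × Bool) : Site d :=
  if w.2 then Function.update x w.1 (x w.1 + 1) else Function.update x w.1 (x w.1 - 1)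

lemma sum_ndir {M : Type*} [AddCommMonoid M] (f : Site d → M) (x : Site d) :
    ∑ w : Fin d × Bool, f (ndir x w) = nbrSum f x := by
  rw [nbrSum, Fintype.sum_prod_type]
  refine Finset.sum_congr rfl fun i _ => ?_
  rw [Fintype.sum_bool]
  rfl

lemma update_inv {x y : Site d} {i : Fin d} (h : y = Function.update x i (x i + 1)) :
    x = Function.update y i (y i - 1) := by
  subst h
  funext j
  rcases eq_or_ne j i with rfl | hj
  · simp
  · simp [Function.update_of_ne hj]

end SandpileHelpers

open Classical in
lemma per_site {d : ℕ} (P : TopplingProcedure d) (hP : P.Legal) (η : Config d)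
    {t : NNReal} {Λ : Finset (Site d)} (hΛ : ∀ x ∈ Λ, 0 < P.T t x η)
    {x : Site d} (hx : x ∈ Λ) :
    ((Finset.univ.filter (fun w : Fin d × Bool =>
        ndir x w ∈ Λ ∧ lastT P η t x ≤ lastT P η t (ndir x w))).card : ℤ)
      ≤ P.configAt η t x := by
  obtain ⟨hst, htop, hub⟩ := lastT_spec P η (hΛ x hx)
  set s := lastT P η t x with hs
  have hs0 : 0 < s := topplesAt_pos P η htop
  have hleg := hP η s x hs0 htop
  have hjump : P.T t x η ≤ leftVal P.T s x η + 1 := by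
    rw [T_const P η (hΛ x hx)]; exact P.jumpLe x η s
  have hterm : ∀ w : Fin d × Bool,
      (if ndir x w ∈ Λ ∧ s ≤ lastT P η t (ndir x w) then (1 : ℤ) else 0)
        ≤ (P.T t (ndir x w) η : ℤ) - (leftVal P.T s (ndir x w) η : ℤ) := by
    intro w
    set y := ndir x w with hy
    split_ifs with h
    · obtain ⟨hyΛ, hle⟩ := h
      obtain ⟨hyt, hytop, _⟩ := lastT_spec P η (hΛ y hyΛ)
      have h1 : leftVal P.T s y η < P.T t y η :=
        lt_of_le_of_lt (leftVal_mono P η y hle)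
          (lt_of_lt_of_le hytop (P.mono y η hyt))
      omega
    · have h1 : leftVal P.T s y η ≤ P.T t y η := leftVal_le_T P η hst
      omega
  have hcardsum : ((Finset.univ.filter (fun w : Fin d × Bool =>
      ndir x w ∈ Λ ∧ s ≤ lastT P η t (ndir x w))).card : ℤ)
      = ∑ w : Fin d × Bool,
          (if ndir x w ∈ Λ ∧ s ≤ lastT P η t (ndir x w) then (1 : ℤ) else 0) := by
    rw [Finset.card_filter]
    push_cast
    rfl
  have hsum : ((Finset.univ.filter (fun w : Fin d × Bool =>
      ndir x w ∈ Λ ∧ s ≤ lastT P η t (ndir x w))).card : ℤ)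
      ≤ nbrSum (fun y => (P.T t y η : ℤ)) x
        - nbrSum (fun y => (leftVal P.T s y η : ℤ)) x := by
    rw [hcardsum]
    calc ∑ w : Fin d × Bool,
          (if ndir x w ∈ Λ ∧ s ≤ lastT P η t (ndir x w) then (1 : ℤ) else 0)
        ≤ ∑ w : Fin d × Bool,
          ((P.T t (ndir x w) η : ℤ) - (leftVal P.T s (ndir x w) η : ℤ)) :=
          Finset.sum_le_sum (fun w _ => hterm w)
      _ = _ := by
          rw [← sum_ndir (fun y => (P.T t y η : ℤ)) x,
            ← sum_ndir (fun y => (leftVal P.T s y η : ℤ)) x, ← Finset.sum_sub_distrib]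
  have hjump' : (P.T t x η : ℤ) ≤ (leftVal P.T s x η : ℤ) + 1 := by exact_mod_cast hjump
  have hd0 : (0 : ℤ) ≤ 2 * d := by positivity
  have hmul : (2 * d : ℤ) * (P.T t x η : ℤ)
      ≤ 2 * d * (leftVal P.T s x η : ℤ) + 2 * d := by nlinarith
  unfold TopplingProcedure.configLeft at hleg
  unfold TopplingProcedure.configAt
  linarith [hsum, hleg, hmul]

/-- Lemma 4.3: if `Λ` is a finite set of sites that have all toppled by time `t`
under a legal toppling procedure, then `∑_{x∈Λ} η_t(x) ≥ β_Λ`, where `β_Λ` is the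
number of internal nearest-neighbor bonds of `Λ`. -/
theorem statement12 (d : ℕ) (hd : 1 ≤ d) (η : Config d) (P : TopplingProcedure d)
    (hP : P.Legal) (t : NNReal) (ht : 0 < t) (Λ : Finset (Site d))
    (hΛ : ∀ x ∈ Λ, 0 < P.T t x η) :
    ({p : Site d × Site d | p.1 ∈ Λ ∧ p.2 ∈ Λ ∧
        ∃ i, p.2 = Function.update p.1 i (p.1 i + 1)}.ncard : ℤ)
      ≤ ∑ x ∈ Λ, P.configAt η t x := by
  classical
  set B : Finset (Site d × Site d) :=
    (Λ ×ˢ Λ).filter (fun p => ∃ i, p.2 = Function.update p.1 i (p.1 i + 1)) with hB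
  have hset : {p : Site d × Site d | p.1 ∈ Λ ∧ p.2 ∈ Λ ∧
      ∃ i, p.2 = Function.update p.1 i (p.1 i + 1)} = ↑B := by
    ext p
    simp only [hB, Finset.coe_filter, Finset.mem_product, Set.mem_setOf_eq]
    tauto
  rw [hset, Set.ncard_coe_finset]
  set F : Finset (Site d × (Fin d × Bool)) :=
    (Λ ×ˢ (Finset.univ : Finset (Fin d × Bool))).filter
      (fun q => ndir q.1 q.2 ∈ Λ ∧ lastT P η t q.1 ≤ lastT P η t (ndir q.1 q.2)) with hF
  have hBF : B.card ≤ F.card := by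
    set f : Site d × Site d → Site d × (Fin d × Bool) := fun p =>
      if h : ∃ i, p.2 = Function.update p.1 i (p.1 i + 1) then
        (if lastT P η t p.1 ≤ lastT P η t p.2 then (p.1, (h.choose, true))
         else (p.2, (h.choose, false)))
      else (p.1, (⟨0, hd⟩, true)) with hf
    set g : Site d × (Fin d × Bool) → Site d × Site d := fun q =>
      cond q.2.2 (q.1, ndir q.1 q.2) (ndir q.1 q.2, q.1) with hg
    have key : ∀ p ∈ B, g (f p) = p := by
      intro p hp
      simp only [hB, Finset.mem_filter, Finset.mem_product] at hp
      obtain ⟨-, hex⟩ := hp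
      have hi : p.2 = Function.update p.1 hex.choose (p.1 hex.choose + 1) :=
        hex.choose_spec
      have e1 : ndir p.1 (hex.choose, true) = p.2 := hi.symm
      have e2 : ndir p.2 (hex.choose, false) = p.1 := (update_inv hi).symm
      simp only [hf]
      rw [dif_pos hex]
      split_ifs with hle
      · show (p.1, ndir p.1 (hex.choose, true)) = p
        rw [e1]
      · show (ndir p.2 (hex.choose, false), p.2) = p
        rw [e2]
    refine Finset.card_le_card_of_injOn f ?_ ?_
    · intro p hp
      have hp' := hp
      simp only [hB, Finset.mem_coe, Finset.mem_filter, Finset.mem_product] at hp'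
      obtain ⟨⟨h1, h2⟩, hex⟩ := hp'
      have hi : p.2 = Function.update p.1 hex.choose (p.1 hex.choose + 1) :=
        hex.choose_spec
      have e1 : ndir p.1 (hex.choose, true) = p.2 := hi.symm
      have e2 : ndir p.2 (hex.choose, false) = p.1 := (update_inv hi).symm
      simp only [hf]
      rw [dif_pos hex]
      split_ifs with hle
      · simp only [hF, Finset.mem_coe, Finset.mem_filter, Finset.mem_product, Finset.mem_univ,
          and_true, true_and]
        exact ⟨h1, by rw [e1]; exact h2, by rw [e1]; exact hle⟩
      · simp only [hF, Finset.mem_coe, Finset.mem_filter, Finset.mem_product, Finset.mem_univ,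
          and_true, true_and]
        exact ⟨h2, by rw [e2]; exact h1, by rw [e2]; exact le_of_not_ge hle⟩
    · intro p hp q hq hpq
      rw [← key p hp, ← key q hq, hpq]
  have hFsum : (F.card : ℤ) ≤ ∑ x ∈ Λ, P.configAt η t x := by
    have h1 : F.card = ∑ x ∈ Λ, (Finset.univ.filter (fun w : Fin d × Bool =>
        ndir x w ∈ Λ ∧ lastT P η t x ≤ lastT P η t (ndir x w))).card := by
      rw [hF, Finset.card_filter, Finset.sum_product]
      refine Finset.sum_congr rfl fun x _ => ?_
      rw [Finset.card_filter]
    rw [h1]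
    push_cast
    exact Finset.sum_le_sum (fun x hx => per_site P hP η hΛ hx)
  calc (B.card : ℤ) ≤ (F.card : ℤ) := by exact_mod_cast hBF
    _ ≤ _ := hFsum
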